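/- Let τ̄ ∈ ℕ with τ̄ ≥ 1 and let σ_0, σ_1, …, σ_{τ̄} be nonnegative reals with a := Σ_{i=0}^{τ̄} σ_i satisfying σ_0 < a < 1. Define h(s) = s − Σ_{i=0}^{τ̄} σ_i·s^{−i} for s > 0 and b' = a^{1/(1+(1−σ₀)·τ̄)}. Fix any b with b' ≤ b ≤ 1, and set α' = 1/(1 − h(b)/h(a)) and ρ = α'·b + (1−α')·a. Then α' ∈ (0,1], and every nonnegative real sequence (V(k))_{k∈ℕ} satisfying V(k+1) ≤ Σ_{i=0}^{τ̄} σ_i·V(max(k−i,0)) for all k ∈ ℕ satisfies V(k) ≤ ρ^k · V(0) for all k ∈ ℕ. -/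

import Mathlib

set_option maxHeartbeats 1000000


/-- Lemma 6 (Lemma `randomsequencelemma`) of the paper: linear convergence of
nonnegative sequences satisfying a weighted delayed recursion, with rate
`ρ = α'·b + (1−α')·a`. -/
theorem stmt_4 (τ : ℕ) (hτ : 1 ≤ τ) (σ : ℕ → ℝ) (hσ : ∀ i, 0 ≤ σ i)
    (a : ℝ) (ha : a = ∑ i ∈ Finset.range (τ + 1), σ i)
    (hσ0 : σ 0 < a) (ha1 : a < 1)
    (h : ℝ → ℝ) (hh : ∀ s, h s = s - ∑ i ∈ Finset.range (τ + 1), σ i * s ^ (-(i : ℝ)))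
    (b' : ℝ) (hb' : b' = a ^ ((1 : ℝ) / (1 + (1 - σ 0) * (τ : ℝ))))
    (b : ℝ) (hb1 : b' ≤ b) (hb2 : b ≤ 1)
    (α' : ℝ) (hα' : α' = 1 / (1 - h b / h a))
    (ρ : ℝ) (hρ : ρ = α' * b + (1 - α') * a) :
    α' ∈ Set.Ioc (0:ℝ) 1 ∧
      ∀ V : ℕ → ℝ, (∀ k, 0 ≤ V k) →
        (∀ k, V (k + 1) ≤ ∑ i ∈ Finset.range (τ + 1), σ i * V (k - i)) →
        ∀ k, V k ≤ ρ ^ k * V 0 := by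
  have hσ00 : 0 ≤ σ 0 := hσ 0
  have ha0 : 0 < a := lt_of_le_of_lt hσ00 hσ0
  have hc1 : σ 0 < 1 := hσ0.trans ha1
  set c := σ 0 with hc
  have hτ1 : (1:ℝ) ≤ (τ:ℝ) := by exact_mod_cast hτ
  have hD : (0:ℝ) < 1 + (1 - c) * τ := by nlinarith
  have hD1 : (1:ℝ) ≤ 1 + (1 - c) * τ := by nlinarith
  have hθ0 : 0 < (1:ℝ)/(1+(1-c)*τ) := by positivity
  have hθ1 : (1:ℝ)/(1+(1-c)*τ) ≤ 1 := by rw [div_le_one hD]; exact hD1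
  have hb'pos : 0 < b' := by rw [hb']; positivity
  have hab' : a ≤ b' := by
    rw [hb']
    calc a = a ^ (1:ℝ) := (Real.rpow_one a).symm
    _ ≤ _ := Real.rpow_le_rpow_of_exponent_ge ha0 ha1.le hθ1
  have hb'1 : b' ≤ 1 := Real.rpow_le_one ha0.le ha1.le hθ0.le |>.trans_eq' (by rw [hb'])
  have hbpos : 0 < b := hb'pos.trans_le hb1
  have hba : a ≤ b := hab'.trans hb1
  -- tail sum
  have hsumtail : ∑ i ∈ Finset.range τ, σ (i+1) = a - c := by
    rw [ha, Finset.sum_range_succ']; ring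
  -- h a < 0
  have hha : h a < 0 := by
    rw [hh]
    have h1 : ∀ i ∈ Finset.range τ, σ (i+1) * a⁻¹ ≤ σ (i+1) * a ^ (-((i+1:ℕ):ℝ)) := by
      intro i _
      apply mul_le_mul_of_nonneg_left _ (hσ _)
      rw [← Real.rpow_neg_one a]
      apply Real.rpow_le_rpow_of_exponent_ge ha0 ha1.le
      push_cast
      linarith [Nat.cast_nonneg (α := ℝ) i]
    have h2 : (a - c) * a⁻¹ ≤ ∑ i ∈ Finset.range τ, σ (i+1) * a ^ (-((i+1:ℕ):ℝ)) := by
      calc (a - c) * a⁻¹ = ∑ i ∈ Finset.range τ, σ (i+1) * a⁻¹ := by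
            rw [← Finset.sum_mul, hsumtail]
      _ ≤ _ := Finset.sum_le_sum h1
    have h3 : ∑ i ∈ Finset.range (τ+1), σ i * a ^ (-(i:ℝ)) =
        (∑ i ∈ Finset.range τ, σ (i+1) * a ^ (-((i+1:ℕ):ℝ))) + c := by
      rw [Finset.sum_range_succ']
      norm_num
      rfl
    have hainv : 1 < a⁻¹ := ((one_lt_inv₀ ha0).2 ha1)
    nlinarith [mul_pos (sub_pos.2 hσ0) (sub_pos.2 hainv)]
  -- a = b' ^ D
  have hDa : b' ^ ((τ:ℝ) * (1 - c) + 1) = a := by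
    have : (τ:ℝ) * (1 - c) + 1 = 1 + (1 - c) * τ := by ring
    rw [this, hb', ← Real.rpow_mul ha0.le, one_div_mul_cancel hD.ne', Real.rpow_one]
  -- AM-GM step
  have hamgm : b' ^ ((τ:ℝ)*(1-c)) ≤ (1-c) * b' ^ τ + c := by
    have hg := Real.geom_mean_le_arith_mean2_weighted (sub_nonneg.2 hc1.le) hσ00
      (pow_nonneg hb'pos.le τ) zero_le_one (by ring)
    have e : (b' ^ τ : ℝ) ^ ((1:ℝ)-c) = b' ^ ((τ:ℝ)*(1-c)) := by
      rw [← Real.rpow_natCast b' τ, ← Real.rpow_mul hb'pos.le]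
    rw [e, Real.one_rpow] at hg
    linarith [hg]
  have hstep1 : a ≤ ((1-c) * b' ^ τ + c) * b' := by
    have e2 : b' ^ ((τ:ℝ)*(1-c) + 1) = b' ^ ((τ:ℝ)*(1-c)) * b' := by
      rw [Real.rpow_add hb'pos, Real.rpow_one]
    rw [← hDa, e2]
    exact mul_le_mul_of_nonneg_right hamgm hb'pos.le
  have hstep2 : a - c ≤ (b' - c) * b' ^ τ := by
    nlinarith [mul_nonneg (mul_nonneg hσ00 (sub_nonneg.2 hb'1))
      (sub_nonneg.2 (pow_le_one₀ (n := τ) hb'pos.le hb'1))]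
  have hstep3 : (b' - c) * b' ^ τ ≤ (b - c) * b ^ τ := by
    have hcb' : c ≤ b' := le_trans hσ0.le hab'
    exact mul_le_mul (by linarith) (pow_le_pow_left₀ hb'pos.le hb1 τ)
      (pow_nonneg hb'pos.le τ) (by linarith [hcb'.trans hb1, hσ00])
  -- h b ≥ 0
  have hhb : 0 ≤ h b := by
    rw [hh]
    have hbτpos : 0 < b ^ τ := pow_pos hbpos τ
    have h1 : ∀ i ∈ Finset.range τ, σ (i+1) * b ^ (-((i+1:ℕ):ℝ)) ≤ σ (i+1) * (b ^ τ)⁻¹ := by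
      intro i hi
      apply mul_le_mul_of_nonneg_left _ (hσ _)
      rw [← Real.rpow_natCast b τ, ← Real.rpow_neg hbpos.le]
      apply Real.rpow_le_rpow_of_exponent_ge hbpos hb2
      have : (i:ℝ) + 1 ≤ (τ:ℝ) := by exact_mod_cast Finset.mem_range.mp hi
      push_cast
      linarith
    have h2 : ∑ i ∈ Finset.range τ, σ (i+1) * b ^ (-((i+1:ℕ):ℝ)) ≤ (a - c) * (b ^ τ)⁻¹ := by
      calc ∑ i ∈ Finset.range τ, σ (i+1) * b ^ (-((i+1:ℕ):ℝ))
          ≤ ∑ i ∈ Finset.range τ, σ (i+1) * (b ^ τ)⁻¹ := Finset.sum_le_sum h1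
      _ = (a - c) * (b ^ τ)⁻¹ := by rw [← Finset.sum_mul, hsumtail]
    have h3 : ∑ i ∈ Finset.range (τ+1), σ i * b ^ (-(i:ℝ)) =
        (∑ i ∈ Finset.range τ, σ (i+1) * b ^ (-((i+1:ℕ):ℝ))) + c := by
      rw [Finset.sum_range_succ']
      norm_num
      rfl
    have h4 : a - c ≤ (b - c) * b ^ τ := hstep2.trans hstep3
    have h5 : (a - c) * (b ^ τ)⁻¹ ≤ b - c := by
      rw [← div_eq_mul_inv]
      exact (div_le_iff₀ hbτpos).mpr h4
    linarith
  -- α' bounds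
  have hfrac : h b / h a ≤ 0 := div_nonpos_iff.2 (Or.inl ⟨hhb, hha.le⟩)
  have hα'0 : 0 < α' := by rw [hα']; exact div_pos one_pos (by linarith)
  have hα'1 : α' ≤ 1 := by rw [hα', div_le_one (by linarith)]; linarith
  have hden' : 1 - h b / h a ≠ 0 := ne_of_gt (by linarith)
  have hcomb : α' * h b + (1 - α') * h a = 0 := by
    have hne : h a ≠ 0 := hha.ne
    have heq : α' * (h a - h b) = h a := by
      rw [hα', div_mul_eq_mul_div, one_mul, div_eq_iff hden']
      field_simp
    linarith [heq]
  -- ρ facts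
  have hρ0 : 0 < ρ := by
    rw [hρ]
    have h1 : 0 < α' * b := mul_pos hα'0 hbpos
    have h2 : 0 ≤ (1 - α') * a := mul_nonneg (by linarith) ha0.le
    linarith
  have hρ1 : ρ ≤ 1 := by
    rw [hρ]
    have h1 : α' * b ≤ α' * 1 := mul_le_mul_of_nonneg_left hb2 hα'0.le
    have h2 : (1 - α') * a ≤ (1 - α') * 1 := mul_le_mul_of_nonneg_left ha1.le (by linarith)
    linarith
  -- convexity : key inequality
  have hconv : ∀ i : ℕ, ρ ^ (-(i:ℝ)) ≤ α' * b ^ (-(i:ℝ)) + (1 - α') * a ^ (-(i:ℝ)) := by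
    intro i
    have hcv := (convexOn_zpow (𝕜 := ℝ) (-(i:ℤ))).2 (Set.mem_Ioi.mpr hbpos)
      (Set.mem_Ioi.mpr ha0) hα'0.le (show (0:ℝ) ≤ 1 - α' by linarith)
      (show α' + (1 - α') = 1 by ring)
    simp only [smul_eq_mul] at hcv
    have e1 : ∀ x : ℝ, x ^ (-(i:ℝ)) = x ^ (-(i:ℤ)) := by
      intro x
      rw [← Real.rpow_intCast x (-(i:ℤ))]
      push_cast
      ring_nf
    rw [e1 ρ, e1 b, e1 a, hρ]
    exact hcv
  have hsb : ∑ i ∈ Finset.range (τ+1), σ i * b ^ (-(i:ℝ)) = b - h b := by rw [hh]; ring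
  have hsa : ∑ i ∈ Finset.range (τ+1), σ i * a ^ (-(i:ℝ)) = a - h a := by rw [hh]; ring
  have key : ∑ i ∈ Finset.range (τ+1), σ i * ρ ^ (-(i:ℝ)) ≤ ρ := by
    calc ∑ i ∈ Finset.range (τ+1), σ i * ρ ^ (-(i:ℝ))
        ≤ ∑ i ∈ Finset.range (τ+1),
            (α' * (σ i * b ^ (-(i:ℝ))) + (1 - α') * (σ i * a ^ (-(i:ℝ)))) := by
          apply Finset.sum_le_sum
          intro i _
          have := mul_le_mul_of_nonneg_left (hconv i) (hσ i)
          nlinarith [this]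
    _ = α' * (∑ i ∈ Finset.range (τ+1), σ i * b ^ (-(i:ℝ)))
          + (1 - α') * (∑ i ∈ Finset.range (τ+1), σ i * a ^ (-(i:ℝ))) := by
          rw [Finset.sum_add_distrib, ← Finset.mul_sum, ← Finset.mul_sum]
    _ = ρ := by rw [hsb, hsa]; linear_combination -hρ - hcomb
  refine ⟨⟨hα'0, hα'1⟩, ?_⟩
  intro V hV hrec
  have main : ∀ k, ∀ j ≤ k, V j ≤ ρ ^ j * V 0 := by
    intro k
    induction k with
    | zero =>
      intro j hj
      interval_cases j
      simp
    | succ k ih =>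
      intro j hj
      by_cases hjk : j ≤ k
      · exact ih j hjk
      · have hj' : j = k + 1 := le_antisymm hj (not_le.mp hjk)
        subst hj'
        have sumbound : ∑ i ∈ Finset.range (τ+1), σ i * ρ ^ (k - i) ≤ ρ ^ (k+1) := by
          calc ∑ i ∈ Finset.range (τ+1), σ i * ρ ^ (k - i)
              ≤ ∑ i ∈ Finset.range (τ+1), σ i * (ρ ^ (k:ℝ) * ρ ^ (-(i:ℝ))) := by
                apply Finset.sum_le_sum
                intro i _
                apply mul_le_mul_of_nonneg_left _ (hσ i)
                rw [← Real.rpow_natCast ρ (k-i), ← Real.rpow_add hρ0]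
                apply Real.rpow_le_rpow_of_exponent_ge hρ0 hρ1
                rcases le_or_gt i k with hik | hik
                · rw [Nat.cast_sub hik]; ring_nf; rfl
                · have : k - i = 0 := Nat.sub_eq_zero_of_le hik.le
                  rw [this]
                  have : (k:ℝ) < i := by exact_mod_cast hik
                  push_cast
                  linarith
          _ = ρ ^ (k:ℝ) * ∑ i ∈ Finset.range (τ+1), σ i * ρ ^ (-(i:ℝ)) := by
                rw [Finset.mul_sum]
                exact Finset.sum_congr rfl fun i _ => by ring
          _ ≤ ρ ^ (k:ℝ) * ρ :=
                mul_le_mul_of_nonneg_left key (Real.rpow_nonneg hρ0.le _)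
          _ = ρ ^ (k+1) := by
                rw [Real.rpow_natCast, pow_succ]
        calc V (k+1) ≤ ∑ i ∈ Finset.range (τ+1), σ i * V (k - i) := hrec k
        _ ≤ ∑ i ∈ Finset.range (τ+1), σ i * (ρ ^ (k - i) * V 0) := by
              apply Finset.sum_le_sum
              intro i _
              exact mul_le_mul_of_nonneg_left (ih (k-i) (Nat.sub_le k i)) (hσ i)
        _ = (∑ i ∈ Finset.range (τ+1), σ i * ρ ^ (k - i)) * V 0 := by
              rw [Finset.sum_mul]
              exact Finset.sum_congr rfl fun i _ => by ring
        _ ≤ ρ ^ (k+1) * V 0 := mul_le_mul_of_nonneg_right sumbound (hV 0)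
  exact fun k => main k k le_rfl
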